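/- (Pairwise near-simultaneous default probability.) For any distinct i, j ∈ {1, …, K} and any ε > 0, P(|τ_i − τ_j| ≤ ε) = 1 − ∫_0^∞ α_j(y) exp(−A_j(y) − A_i(y+ε) − A_0(y+ε)) dy − ∫_0^∞ α_i(y) exp(−A_i(y) − A_j(y+ε) − A_0(y+ε)) dy. -/

import Mathlib

open MeasureTheory ProbabilityTheory

/-- The cumulative hazard `A(t) = ∫_0^t α(s) ds`. -/
noncomputable def cumHaz (α : ℝ → ℝ) (t : ℝ) : ℝ := ∫ s in (0:ℝ)..t, α s

/-- The first time `s ≥ 0` at which the cumulative hazard reaches level `z`,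
i.e. `inf {s ≥ 0 : A(s) ≥ z}`. -/
noncomputable def hitTime (α : ℝ → ℝ) (z : ℝ) : ℝ :=
  sInf {s : ℝ | 0 ≤ s ∧ z ≤ cumHaz α s}

open Set Real Filter

section haz

variable {α : ℝ → ℝ}

lemma cumHaz_zero : cumHaz α 0 = 0 := intervalIntegral.integral_same

lemma cumHaz_intervalIntegrable (hcont : ContinuousOn α (Set.Ici 0)) {a b : ℝ}
    (ha : 0 ≤ a) (hb : 0 ≤ b) : IntervalIntegrable α volume a b := by
  apply ContinuousOn.intervalIntegrable
  exact hcont.mono fun x hx => le_trans (le_inf ha hb) hx.1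

lemma cumHaz_hasDerivAt (hcont : ContinuousOn α (Set.Ici 0)) {y : ℝ} (hy : 0 < y) :
    HasDerivAt (cumHaz α) (α y) y := by
  apply intervalIntegral.integral_hasDerivAt_right
  · exact cumHaz_intervalIntegrable hcont le_rfl hy.le
  · exact (hcont.mono Set.Ioi_subset_Ici_self).stronglyMeasurableAtFilter isOpen_Ioi y hy
  · exact hcont.continuousAt (Ici_mem_nhds hy)

lemma cumHaz_continuousOn (hcont : ContinuousOn α (Set.Ici 0)) :
    ContinuousOn (cumHaz α) (Set.Ici 0) := by
  intro t ht
  have ht' : (0:ℝ) ≤ t := ht.out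
  have h1 : ContinuousOn (cumHaz α) (Set.uIcc 0 (t + 1)) :=
    intervalIntegral.continuousOn_primitive_interval
      ((hcont.mono (by rw [Set.uIcc_of_le (by linarith)]
                       exact Set.Icc_subset_Ici_self)).integrableOn_compact isCompact_uIcc)
  have h2 : ContinuousWithinAt (cumHaz α) (Set.uIcc 0 (t + 1)) t :=
    h1 t (by rw [Set.uIcc_of_le (by linarith)]; exact ⟨ht', by linarith⟩)
  apply h2.mono_of_mem_nhdsWithin
  rw [Set.uIcc_of_le (by linarith : (0:ℝ) ≤ t + 1), ← Set.Ici_inter_Iic]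
  exact Filter.inter_mem self_mem_nhdsWithin
    (mem_nhdsWithin_of_mem_nhds (Iic_mem_nhds (by linarith)))

lemma cumHaz_strictMonoOn (hpos : ∀ t, 0 ≤ t → 0 < α t) (hcont : ContinuousOn α (Set.Ici 0)) :
    StrictMonoOn (cumHaz α) (Set.Ici 0) := by
  intro a ha b hb hab
  have h1 : IntervalIntegrable α volume 0 a := cumHaz_intervalIntegrable hcont le_rfl ha.out
  have h2 : IntervalIntegrable α volume a b := cumHaz_intervalIntegrable hcont ha.out hb.out
  have hadd := intervalIntegral.integral_add_adjacent_intervals h1 h2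
  have hposint : 0 < ∫ s in a..b, α s := by
    apply intervalIntegral.intervalIntegral_pos_of_pos_on h2
    · exact fun x hx => hpos x (le_of_lt (lt_of_le_of_lt ha.out hx.1))
    · exact hab
  show cumHaz α a < cumHaz α b
  unfold cumHaz
  linarith [hadd]

lemma cumHaz_monotoneOn (hpos : ∀ t, 0 ≤ t → 0 < α t) (hcont : ContinuousOn α (Set.Ici 0)) :
    MonotoneOn (cumHaz α) (Set.Ici 0) :=
  (cumHaz_strictMonoOn hpos hcont).monotoneOn

lemma cumHaz_nonneg (hpos : ∀ t, 0 ≤ t → 0 < α t) (hcont : ContinuousOn α (Set.Ici 0))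
    {t : ℝ} (ht : 0 ≤ t) : 0 ≤ cumHaz α t := by
  have := cumHaz_monotoneOn hpos hcont Set.self_mem_Ici ht ht
  rw [cumHaz_zero] at this
  exact this

lemma hitSet_nonempty (htop : Tendsto (cumHaz α) atTop atTop) (z : ℝ) :
    {s : ℝ | 0 ≤ s ∧ z ≤ cumHaz α s}.Nonempty := by
  obtain ⟨s, hs1, hs2⟩ := ((htop.eventually_ge_atTop z).and (eventually_ge_atTop 0)).exists
  exact ⟨s, hs2, hs1⟩

lemma hitTime_nonneg (htop : Tendsto (cumHaz α) atTop atTop) (z : ℝ) : 0 ≤ hitTime α z :=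
  le_csInf (hitSet_nonempty htop z) fun s hs => hs.1

lemma hitTime_le_iff (hpos : ∀ t, 0 ≤ t → 0 < α t) (hcont : ContinuousOn α (Set.Ici 0))
    (htop : Tendsto (cumHaz α) atTop atTop) {t : ℝ} (ht : 0 ≤ t) (z : ℝ) :
    hitTime α z ≤ t ↔ z ≤ cumHaz α t := by
  constructor
  · intro h
    by_contra hlt
    push_neg at hlt
    have hcw : ContinuousWithinAt (cumHaz α) (Set.Ici 0) t := cumHaz_continuousOn hcont t ht
    have hev : ∀ᶠ s in nhdsWithin t (Set.Ioi t), cumHaz α s < z := by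
      have : Tendsto (cumHaz α) (nhdsWithin t (Set.Ioi t)) (nhds (cumHaz α t)) :=
        hcw.tendsto.mono_left (nhdsWithin_mono t (fun x hx => le_trans ht (le_of_lt hx)))
      exact this.eventually_lt_const hlt
    obtain ⟨t', ht'1, ht'2⟩ := (hev.and eventually_mem_nhdsWithin).exists
    have : t' ≤ hitTime α z := by
      apply le_csInf (hitSet_nonempty htop z)
      intro s hs
      by_contra hst
      push_neg at hst
      have := cumHaz_monotoneOn hpos hcont hs.1 (le_trans ht (le_of_lt ht'2.out)) hst.le
      linarith [hs.2]
    linarith [ht'2.out]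
  · intro h
    exact csInf_le ⟨0, fun s hs => hs.1⟩ ⟨ht, h⟩

lemma lt_hitTime_iff (hpos : ∀ t, 0 ≤ t → 0 < α t) (hcont : ContinuousOn α (Set.Ici 0))
    (htop : Tendsto (cumHaz α) atTop atTop) {t : ℝ} (ht : 0 ≤ t) (z : ℝ) :
    t < hitTime α z ↔ cumHaz α t < z := by
  rw [← not_le, ← not_le, hitTime_le_iff hpos hcont htop ht]

lemma hitTime_mono (htop : Tendsto (cumHaz α) atTop atTop) : Monotone (hitTime α) := by
  intro z1 z2 h
  apply csInf_le_csInf ⟨0, fun s hs => hs.1⟩ (hitSet_nonempty htop z2)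
  intro s hs
  exact ⟨hs.1, le_trans h hs.2⟩

lemma hitTime_cumHaz (hpos : ∀ t, 0 ≤ t → 0 < α t) (hcont : ContinuousOn α (Set.Ici 0))
    (htop : Tendsto (cumHaz α) atTop atTop) {y : ℝ} (hy : 0 < y) :
    hitTime α (cumHaz α y) = y := by
  refine le_antisymm ((hitTime_le_iff hpos hcont htop hy.le _).2 le_rfl) ?_
  by_contra h
  push_neg at h
  have h0 : 0 ≤ hitTime α (cumHaz α y) := hitTime_nonneg htop _
  have h1 := (hitTime_le_iff hpos hcont htop h0 (cumHaz α y)).1 le_rfl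
  have h2 := cumHaz_strictMonoOn hpos hcont h0 hy.le h
  linarith

lemma image_cumHaz (hpos : ∀ t, 0 ≤ t → 0 < α t) (hcont : ContinuousOn α (Set.Ici 0))
    (htop : Tendsto (cumHaz α) atTop atTop) :
    cumHaz α '' Set.Ioi 0 = Set.Ioi 0 := by
  ext w
  constructor
  · rintro ⟨y, hy, rfl⟩
    have := cumHaz_strictMonoOn hpos hcont Set.self_mem_Ici (Set.mem_Ici.2 (le_of_lt hy)) hy
    rw [cumHaz_zero] at this
    exact this
  · intro hw
    obtain ⟨M, hM1, hM2⟩ := ((htop.eventually_ge_atTop w).and (eventually_ge_atTop 0)).exists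
    have hein : w ∈ Set.Icc (cumHaz α 0) (cumHaz α M) := by
      rw [cumHaz_zero]; exact ⟨le_of_lt hw, hM1⟩
    obtain ⟨y, hy, hyw⟩ := intermediate_value_Icc hM2
      ((cumHaz_continuousOn hcont).mono Set.Icc_subset_Ici_self) hein
    refine ⟨y, ?_, hyw⟩
    rcases eq_or_lt_of_le hy.1 with h | h
    · exfalso; rw [← h, cumHaz_zero] at hyw; exact absurd hyw.symm (ne_of_gt hw)
    · exact h

end haz
section expm

open MeasureTheory ProbabilityTheory Set Real Filter

/-- The standard exponential distribution on `ℝ`. -/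
noncomputable def expM : Measure ℝ :=
  MeasureTheory.volume.withDensity ((Set.Ioi (0:ℝ)).indicator fun x => ENNReal.ofReal (Real.exp (-x)))

lemma lint_exp (c : ℝ) :
    ∫⁻ x in Set.Ioi c, ENNReal.ofReal (Real.exp (-x)) = ENNReal.ofReal (Real.exp (-c)) := by
  rw [← ofReal_integral_eq_lintegral_ofReal]
  · rw [integral_exp_neg_Ioi]
  · have := exp_neg_integrableOn_Ioi c (one_pos)
    simp at this; exact this
  · exact Filter.Eventually.of_forall fun x => (exp_pos _).le

lemma expM_apply_Ioi (c : ℝ) : expM (Set.Ioi c) = ENNReal.ofReal (Real.exp (-(max c 0))) := by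
  rw [expM, withDensity_apply _ measurableSet_Ioi]
  rw [← lintegral_indicator measurableSet_Ioi _]
  simp_rw [Set.indicator_indicator, Set.Ioi_inter_Ioi]
  rw [lintegral_indicator measurableSet_Ioi _, lint_exp]

lemma expM_Ioi {c : ℝ} (hc : 0 ≤ c) : expM (Set.Ioi c) = ENNReal.ofReal (Real.exp (-c)) := by
  rw [expM_apply_Ioi, max_eq_left hc]

instance : IsProbabilityMeasure expM := by
  constructor
  have : (univ : Set ℝ) = Set.Iic 0 ∪ Set.Ioi 0 := by simp
  rw [expM, withDensity_apply _ MeasurableSet.univ, Measure.restrict_univ,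
    lintegral_indicator measurableSet_Ioi _, lint_exp]
  simp

lemma map_eq_expM {Ω : Type*} [MeasurableSpace Ω] (P : Measure Ω) [IsProbabilityMeasure P]
    (Z : Ω → ℝ) (hZmeas : Measurable Z)
    (hZexp : ∀ t : ℝ, 0 ≤ t → P {ω | t < Z ω} = ENNReal.ofReal (Real.exp (-t))) :
    P.map Z = expM := by
  have hmap : ∀ t : ℝ, P.map Z (Set.Ioi t) = P {ω | t < Z ω} := by
    intro t
    rw [Measure.map_apply hZmeas measurableSet_Ioi]
    rfl
  have h1 : IsProbabilityMeasure (P.map Z) := Measure.isProbabilityMeasure_map hZmeas.aemeasurable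
  apply ext_of_generate_finite (Set.range Set.Ioi)
    (BorelSpace.measurable_eq.trans (borel_eq_generateFrom_Ioi ℝ)) isPiSystem_Ioi
  · rintro s ⟨t, rfl⟩
    rw [hmap, expM_apply_Ioi]
    rcases le_or_gt 0 t with ht | ht
    · rw [max_eq_left ht, hZexp t ht]
    · rw [max_eq_right ht.le]
      simp only [neg_zero, Real.exp_zero, ENNReal.ofReal_one]
      refine le_antisymm prob_le_one ?_
      have h2 : P {ω | 0 < Z ω} = 1 := by rw [hZexp 0 le_rfl]; simp
      rw [← h2]
      exact measure_mono fun ω hω => lt_trans ht hω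
  · rw [h1.measure_univ, (measure_univ (μ := expM))]

end expm
section core

open MeasureTheory ProbabilityTheory Set Real Filter

lemma monotone_comp {αa αb : ℝ → ℝ}
    (hpb : ∀ t, 0 ≤ t → 0 < αb t) (hcb : ContinuousOn αb (Set.Ici 0))
    (hta : Tendsto (cumHaz αa) atTop atTop) {ε : ℝ} (hε : 0 ≤ ε) :
    Monotone fun z => cumHaz αb (hitTime αa z + ε) := by
  intro z1 z2 h
  exact cumHaz_monotoneOn hpb hcb
    (add_nonneg (hitTime_nonneg hta _) hε) (add_nonneg (hitTime_nonneg hta _) hε)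
    (add_le_add_left (hitTime_mono hta h) ε)

lemma integrand_integrableOn {αa αb αc : ℝ → ℝ}
    (hpa : ∀ t, 0 ≤ t → 0 < αa t) (hca : ContinuousOn αa (Set.Ici 0))
    (hta : Tendsto (cumHaz αa) atTop atTop)
    (hpb : ∀ t, 0 ≤ t → 0 < αb t) (hcb : ContinuousOn αb (Set.Ici 0))
    (hpc : ∀ t, 0 ≤ t → 0 < αc t) (hcc : ContinuousOn αc (Set.Ici 0))
    {ε : ℝ} (hε : 0 < ε) :
    IntegrableOn
      (fun y => αa y * Real.exp (-cumHaz αa y - cumHaz αb (y + ε) - cumHaz αc (y + ε)))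
      (Set.Ioi 0) := by
  have hg : IntegrableOn (fun y => αa y * Real.exp (-cumHaz αa y)) (Set.Ioi 0) := by
    apply integrableOn_Ioi_deriv_of_nonneg (g := fun y => -Real.exp (-cumHaz αa y)) (l := 0)
    · exact (Real.continuous_exp.continuousAt.comp_continuousWithinAt
        ((cumHaz_continuousOn hca 0 Set.self_mem_Ici).neg)).neg
    · intro x hx
      have h : HasDerivAt (fun y => -Real.exp (-cumHaz αa y)) (-(Real.exp (-cumHaz αa x) * -αa x)) x :=
        ((cumHaz_hasDerivAt hca hx).neg.exp).neg
      convert h using 1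
      ring
    · intro x hx
      exact mul_nonneg (hpa x hx.out.le).le (Real.exp_pos _).le
    · have h1 : Tendsto (fun y => -cumHaz αa y) atTop atBot := tendsto_neg_atTop_atBot.comp hta
      have h2 := Real.tendsto_exp_atBot.comp h1
      have h3 := h2.neg
      rwa [neg_zero] at h3
  have hfc : ContinuousOn
      (fun y => αa y * Real.exp (-cumHaz αa y - cumHaz αb (y + ε) - cumHaz αc (y + ε)))
      (Set.Ioi 0) := by
    intro y hy
    have hy' : (0:ℝ) < y := hy.out
    apply ContinuousAt.continuousWithinAt
    have hAa : ContinuousAt (cumHaz αa) y := (cumHaz_hasDerivAt hca hy').continuousAt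
    have hadd : ContinuousAt (fun x : ℝ => x + ε) y :=
      (continuous_id.add continuous_const).continuousAt
    have hAb : ContinuousAt (fun x => cumHaz αb (x + ε)) y := by
      exact ContinuousAt.comp (x := y) (f := fun x : ℝ => x + ε)
        ((cumHaz_hasDerivAt hcb (by linarith : (0:ℝ) < y + ε)).continuousAt) hadd
    have hAc : ContinuousAt (fun x => cumHaz αc (x + ε)) y := by
      exact ContinuousAt.comp (x := y) (f := fun x : ℝ => x + ε)
        ((cumHaz_hasDerivAt hcc (by linarith : (0:ℝ) < y + ε)).continuousAt) hadd
    exact (hca.continuousAt (Ici_mem_nhds hy')).mul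
      (Real.continuous_exp.continuousAt.comp ((hAa.neg.sub hAb).sub hAc))
  apply Integrable.mono' hg (hfc.aestronglyMeasurable measurableSet_Ioi)
  rw [ae_restrict_iff' measurableSet_Ioi]
  apply ae_of_all
  intro y hy
  have hy' : (0:ℝ) < y := hy.out
  have hb0 : 0 ≤ cumHaz αb (y + ε) := cumHaz_nonneg hpb hcb (by linarith)
  have hc0 : 0 ≤ cumHaz αc (y + ε) := cumHaz_nonneg hpc hcc (by linarith)
  rw [Real.norm_eq_abs, abs_of_nonneg (mul_nonneg (hpa y hy'.le).le (Real.exp_pos _).le)]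
  exact mul_le_mul_of_nonneg_left (Real.exp_le_exp.2 (by linarith)) (hpa y hy'.le).le

lemma prob_gap {Ω : Type*} [MeasurableSpace Ω] (P : Measure Ω) [IsProbabilityMeasure P]
    {αa αb αc : ℝ → ℝ}
    (hpa : ∀ t, 0 ≤ t → 0 < αa t) (hca : ContinuousOn αa (Set.Ici 0))
    (hta : Tendsto (cumHaz αa) atTop atTop)
    (hpb : ∀ t, 0 ≤ t → 0 < αb t) (hcb : ContinuousOn αb (Set.Ici 0))
    (hpc : ∀ t, 0 ≤ t → 0 < αc t) (hcc : ContinuousOn αc (Set.Ici 0))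
    (Za Zb Zc : Ω → ℝ) (hma : Measurable Za) (hmb : Measurable Zb) (hmc : Measurable Zc)
    (hlawa : P.map Za = expM) (hlawb : P.map Zb = expM) (hlawc : P.map Zc = expM)
    (hindep1 : IndepFun Za (fun ω => (Zb ω, Zc ω)) P)
    (hindep2 : IndepFun Zb Zc P)
    {ε : ℝ} (hε : 0 < ε) :
    P {ω | cumHaz αb (hitTime αa (Za ω) + ε) < Zb ω ∧
           cumHaz αc (hitTime αa (Za ω) + ε) < Zc ω}
      = ENNReal.ofReal (∫ y in Set.Ioi (0:ℝ),
          αa y * Real.exp (-cumHaz αa y - cumHaz αb (y + ε) - cumHaz αc (y + ε))) := by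
  set u : ℝ → ℝ := fun z => cumHaz αb (hitTime αa z + ε) with hu
  set v : ℝ → ℝ := fun z => cumHaz αc (hitTime αa z + ε) with hv
  have hmu : Measurable u := (monotone_comp hpb hcb hta hε.le).measurable
  have hmv : Measurable v := (monotone_comp hpc hcc hta hε.le).measurable
  have hunn : ∀ z, 0 ≤ u z := fun z =>
    cumHaz_nonneg hpb hcb (add_nonneg (hitTime_nonneg hta _) hε.le)
  have hvnn : ∀ z, 0 ≤ v z := fun z =>
    cumHaz_nonneg hpc hcc (add_nonneg (hitTime_nonneg hta _) hε.le)
  set S : Set (ℝ × ℝ × ℝ) := {p | u p.1 < p.2.1 ∧ v p.1 < p.2.2} with hSdef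
  have hS : MeasurableSet S :=
    (measurableSet_lt (hmu.comp measurable_fst) (measurable_fst.comp measurable_snd)).inter
      (measurableSet_lt (hmv.comp measurable_fst) (measurable_snd.comp measurable_snd))
  have hT : Measurable fun ω => (Za ω, (Zb ω, Zc ω)) := hma.prodMk (hmb.prodMk hmc)
  have hset : {ω | cumHaz αb (hitTime αa (Za ω) + ε) < Zb ω ∧
      cumHaz αc (hitTime αa (Za ω) + ε) < Zc ω}
      = (fun ω => (Za ω, (Zb ω, Zc ω))) ⁻¹' S := rfl
  rw [hset, ← Measure.map_apply hT hS]
  have hmapT : P.map (fun ω => (Za ω, (Zb ω, Zc ω))) = expM.prod (expM.prod expM) := by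
    have h1 := (indepFun_iff_map_prod_eq_prod_map_map hma.aemeasurable
      (hmb.prodMk hmc).aemeasurable).1 hindep1
    have h2 := (indepFun_iff_map_prod_eq_prod_map_map hmb.aemeasurable
      hmc.aemeasurable).1 hindep2
    rw [h1, h2, hlawa, hlawb, hlawc]
  rw [hmapT, Measure.prod_apply hS]
  have hslice : ∀ z, (expM.prod expM) (Prod.mk z ⁻¹' S)
      = ENNReal.ofReal (Real.exp (-u z)) * ENNReal.ofReal (Real.exp (-v z)) := by
    intro z
    have hpre : Prod.mk z ⁻¹' S = Set.Ioi (u z) ×ˢ Set.Ioi (v z) := rfl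
    rw [hpre, Measure.prod_prod, expM_Ioi (hunn z), expM_Ioi (hvnn z)]
  simp_rw [hslice]
  set F : ℝ → ENNReal := fun z =>
    ENNReal.ofReal (Real.exp (-u z)) * ENNReal.ofReal (Real.exp (-v z)) with hF
  have hFmeas : Measurable F :=
    ((ENNReal.measurable_ofReal.comp (Real.measurable_exp.comp hmu.neg)).mul
      (ENNReal.measurable_ofReal.comp (Real.measurable_exp.comp hmv.neg)))
  have hDmeas : Measurable ((Set.Ioi (0:ℝ)).indicator fun x => ENNReal.ofReal (Real.exp (-x))) :=
    (ENNReal.measurable_ofReal.comp (Real.measurable_exp.comp measurable_neg)).indicator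
      measurableSet_Ioi
  rw [show expM = MeasureTheory.volume.withDensity
      ((Set.Ioi (0:ℝ)).indicator fun x => ENNReal.ofReal (Real.exp (-x))) from rfl,
    lintegral_withDensity_eq_lintegral_mul _ hDmeas hFmeas]
  have hprod : (((Set.Ioi (0:ℝ)).indicator fun x => ENNReal.ofReal (Real.exp (-x))) * F)
      = (Set.Ioi (0:ℝ)).indicator (fun z => ENNReal.ofReal (Real.exp (-z)) * F z) := by
    ext z
    by_cases hz : z ∈ Set.Ioi (0:ℝ) <;> simp [Set.indicator, hz]
  rw [hprod, lintegral_indicator measurableSet_Ioi]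
  -- substitution z = cumHaz αa y
  have himg := image_cumHaz hpa hca hta
  have hinj : Set.InjOn (cumHaz αa) (Set.Ioi 0) :=
    Set.InjOn.mono Set.Ioi_subset_Ici_self (cumHaz_strictMonoOn hpa hca).injOn
  have hf' : ∀ x ∈ Set.Ioi (0:ℝ), HasFDerivWithinAt (cumHaz αa)
      ((1 : ℝ →L[ℝ] ℝ).smulRight (αa x)) (Set.Ioi 0) x := fun x hx =>
    ((cumHaz_hasDerivAt hca hx).hasFDerivAt).hasFDerivWithinAt
  conv_lhs => rw [show Set.Ioi (0:ℝ) = cumHaz αa '' Set.Ioi 0 from himg.symm]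
  rw [lintegral_image_eq_lintegral_abs_det_fderiv_mul MeasureTheory.volume measurableSet_Ioi
      hf' hinj _]
  rw [ofReal_integral_eq_lintegral_ofReal
    (integrand_integrableOn hpa hca hta hpb hcb hpc hcc hε)
    ((ae_restrict_iff' measurableSet_Ioi).2 (ae_of_all _ fun y hy =>
      mul_nonneg (hpa y hy.out.le).le (Real.exp_pos _).le))]
  apply setLIntegral_congr_fun measurableSet_Ioi
  intro y hy
  have hy' : (0:ℝ) < y := hy.out
  have hhit : hitTime αa (cumHaz αa y) = y := hitTime_cumHaz hpa hca hta hy'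
  have huy : u (cumHaz αa y) = cumHaz αb (y + ε) := by rw [hu]; simp only; rw [hhit]
  have hvy : v (cumHaz αa y) = cumHaz αc (y + ε) := by rw [hv]; simp only; rw [hhit]
  have hd : ((1 : ℝ →L[ℝ] ℝ).smulRight (αa y)).det = αa y :=
    (ContinuousLinearMap.det_smulRight 1 (αa y)).trans (by simp)
  beta_reduce
  rw [hd, hF]
  simp only
  rw [huy, hvy, abs_of_pos (hpa y hy'.le)]
  have hexp : αa y * Real.exp (-cumHaz αa y - cumHaz αb (y + ε) - cumHaz αc (y + ε))
      = αa y * (Real.exp (-cumHaz αa y) *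
        (Real.exp (-cumHaz αb (y + ε)) * Real.exp (-cumHaz αc (y + ε)))) := by
    rw [← Real.exp_add, ← Real.exp_add]; ring_nf
  rw [hexp, ENNReal.ofReal_mul (hpa y hy'.le).le,
    ENNReal.ofReal_mul (Real.exp_pos _).le, ENNReal.ofReal_mul (Real.exp_pos _).le]

end core
section main

open MeasureTheory ProbabilityTheory Set Real Filter

lemma abs_min_sub_min_le_iff {A B C ε : ℝ} (hε : 0 < ε) :
    |min A B - min A C| ≤ ε ↔ ¬((B + ε < C ∧ B + ε < A) ∨ (C + ε < B ∧ C + ε < A)) := by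
  have key : ∀ X Y : ℝ, min A X + ε < min A Y ↔ (X + ε < Y ∧ X + ε < A) := by
    intro X Y
    constructor
    · intro h
      have hXA : X < A := by
        by_contra hAX
        push_neg at hAX
        rw [min_eq_left hAX] at h
        have h2 : min A Y ≤ A := min_le_left _ _
        linarith
      rw [min_eq_right hXA.le] at h
      exact ⟨lt_of_lt_of_le h (min_le_right _ _), lt_of_lt_of_le h (min_le_left _ _)⟩
    · rintro ⟨h1, h2⟩
      have h3 : min A X + ε ≤ X + ε := add_le_add_left (min_le_right _ _) ε
      exact lt_of_le_of_lt h3 (lt_min h2 h1)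
  rw [← not_lt, not_iff_not, lt_abs]
  constructor
  · rintro (h | h)
    · right
      exact (key C B).1 (by linarith)
    · left
      exact (key B C).1 (by linarith)
  · rintro (h | h)
    · right; have := (key B C).2 h; linarith
    · left; have := (key C B).2 h; linarith

/-- (Pairwise near-simultaneous default probability.) For distinct banks
`i ≠ j` in `{1, …, K}` and any `ε > 0`,
`P(|τ_i − τ_j| ≤ ε) = 1 − ∫_0^∞ α_j(y) e^{−A_j(y) − A_i(y+ε) − A_0(y+ε)} dy
                        − ∫_0^∞ α_i(y) e^{−A_i(y) − A_j(y+ε) − A_0(y+ε)} dy`. -/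
theorem pairwise_near_simultaneous_default
    {Ω : Type*} [MeasurableSpace Ω] (P : Measure Ω) [IsProbabilityMeasure P]
    (K : ℕ) (Z : Fin (K + 1) → Ω → ℝ) (α : Fin (K + 1) → ℝ → ℝ)
    (hZmeas : ∀ i, Measurable (Z i))
    (hZindep : iIndepFun Z P)
    (hZexp : ∀ i, ∀ t : ℝ, 0 ≤ t → P {ω | t < Z i ω} = ENNReal.ofReal (Real.exp (-t)))
    (hαpos : ∀ i t, 0 ≤ t → 0 < α i t)
    (hαcont : ∀ i, ContinuousOn (α i) (Set.Ici 0))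
    (hAinf : ∀ i, Filter.Tendsto (cumHaz (α i)) Filter.atTop Filter.atTop)
    (i j : Fin K) (hij : i ≠ j) (ε : ℝ) (hε : 0 < ε) :
    P {ω | |min (hitTime (α 0) (Z 0 ω)) (hitTime (α i.succ) (Z i.succ ω))
          - min (hitTime (α 0) (Z 0 ω)) (hitTime (α j.succ) (Z j.succ ω))| ≤ ε}
      = 1 - ENNReal.ofReal
          ((∫ y in Set.Ioi (0 : ℝ), α j.succ y *
              Real.exp (-cumHaz (α j.succ) y - cumHaz (α i.succ) (y + ε) - cumHaz (α 0) (y + ε)))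
            + ∫ y in Set.Ioi (0 : ℝ), α i.succ y *
              Real.exp (-cumHaz (α i.succ) y - cumHaz (α j.succ) (y + ε) - cumHaz (α 0) (y + ε))) := by
  have hii0 : (i.succ : Fin (K + 1)) ≠ 0 := Fin.succ_ne_zero i
  have hjj0 : (j.succ : Fin (K + 1)) ≠ 0 := Fin.succ_ne_zero j
  have hij' : (i.succ : Fin (K + 1)) ≠ j.succ := fun h => hij (Fin.succ_injective K h)
  have hlaw : ∀ k, P.map (Z k) = expM := fun k => map_eq_expM P (Z k) (hZmeas k) (hZexp k)
  set Ci : Set Ω := {ω | cumHaz (α j.succ) (hitTime (α i.succ) (Z i.succ ω) + ε) < Z j.succ ω ∧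
      cumHaz (α 0) (hitTime (α i.succ) (Z i.succ ω) + ε) < Z 0 ω} with hCi
  set Cj : Set Ω := {ω | cumHaz (α i.succ) (hitTime (α j.succ) (Z j.succ ω) + ε) < Z i.succ ω ∧
      cumHaz (α 0) (hitTime (α j.succ) (Z j.succ ω) + ε) < Z 0 ω} with hCj
  have hmCi : MeasurableSet Ci :=
    (measurableSet_lt ((monotone_comp (hαpos j.succ) (hαcont j.succ)
        (hAinf i.succ) hε.le).measurable.comp (hZmeas i.succ)) (hZmeas j.succ)).inter
      (measurableSet_lt ((monotone_comp (hαpos 0) (hαcont 0)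
        (hAinf i.succ) hε.le).measurable.comp (hZmeas i.succ)) (hZmeas 0))
  have hmCj : MeasurableSet Cj :=
    (measurableSet_lt ((monotone_comp (hαpos i.succ) (hαcont i.succ)
        (hAinf j.succ) hε.le).measurable.comp (hZmeas j.succ)) (hZmeas i.succ)).inter
      (measurableSet_lt ((monotone_comp (hαpos 0) (hαcont 0)
        (hAinf j.succ) hε.le).measurable.comp (hZmeas j.succ)) (hZmeas 0))
  have hE : {ω | |min (hitTime (α 0) (Z 0 ω)) (hitTime (α i.succ) (Z i.succ ω))
          - min (hitTime (α 0) (Z 0 ω)) (hitTime (α j.succ) (Z j.succ ω))| ≤ ε}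
      = (Ci ∪ Cj)ᶜ := by
    ext ω
    simp only [Set.mem_setOf_eq, Set.mem_compl_iff, Set.mem_union, hCi, hCj]
    rw [abs_min_sub_min_le_iff hε]
    apply not_congr
    apply or_congr
    · exact and_congr
        (lt_hitTime_iff (hαpos j.succ) (hαcont j.succ) (hAinf j.succ)
          (add_nonneg (hitTime_nonneg (hAinf i.succ) _) hε.le) _)
        (lt_hitTime_iff (hαpos 0) (hαcont 0) (hAinf 0)
          (add_nonneg (hitTime_nonneg (hAinf i.succ) _) hε.le) _)
    · exact and_congr
        (lt_hitTime_iff (hαpos i.succ) (hαcont i.succ) (hAinf i.succ)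
          (add_nonneg (hitTime_nonneg (hAinf j.succ) _) hε.le) _)
        (lt_hitTime_iff (hαpos 0) (hαcont 0) (hAinf 0)
          (add_nonneg (hitTime_nonneg (hAinf j.succ) _) hε.le) _)
  have hdisj : Disjoint Ci Cj := by
    rw [Set.disjoint_left]
    intro ω h1 h2
    rw [hCi, Set.mem_setOf_eq] at h1
    rw [hCj, Set.mem_setOf_eq] at h2
    have e1 := (lt_hitTime_iff (hαpos j.succ) (hαcont j.succ) (hAinf j.succ)
      (add_nonneg (hitTime_nonneg (hAinf i.succ) _) hε.le) _).2 h1.1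
    have e2 := (lt_hitTime_iff (hαpos i.succ) (hαcont i.succ) (hAinf i.succ)
      (add_nonneg (hitTime_nonneg (hAinf j.succ) _) hε.le) _).2 h2.1
    linarith
  have hPCi : P Ci = ENNReal.ofReal (∫ y in Set.Ioi (0:ℝ), α i.succ y *
      Real.exp (-cumHaz (α i.succ) y - cumHaz (α j.succ) (y + ε) - cumHaz (α 0) (y + ε))) := by
    rw [hCi]
    exact prob_gap P (hαpos i.succ) (hαcont i.succ) (hAinf i.succ)
      (hαpos j.succ) (hαcont j.succ) (hαpos 0) (hαcont 0)
      (Z i.succ) (Z j.succ) (Z 0) (hZmeas i.succ) (hZmeas j.succ) (hZmeas 0)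
      (hlaw i.succ) (hlaw j.succ) (hlaw 0)
      ((hZindep.indepFun_prodMk hZmeas j.succ 0 i.succ hij'.symm hii0.symm).symm)
      (hZindep.indepFun hjj0) hε
  have hPCj : P Cj = ENNReal.ofReal (∫ y in Set.Ioi (0:ℝ), α j.succ y *
      Real.exp (-cumHaz (α j.succ) y - cumHaz (α i.succ) (y + ε) - cumHaz (α 0) (y + ε))) := by
    rw [hCj]
    exact prob_gap P (hαpos j.succ) (hαcont j.succ) (hAinf j.succ)
      (hαpos i.succ) (hαcont i.succ) (hαpos 0) (hαcont 0)
      (Z j.succ) (Z i.succ) (Z 0) (hZmeas j.succ) (hZmeas i.succ) (hZmeas 0)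
      (hlaw j.succ) (hlaw i.succ) (hlaw 0)
      ((hZindep.indepFun_prodMk hZmeas i.succ 0 j.succ hij' hjj0.symm).symm)
      (hZindep.indepFun hii0) hε
  have hnnj : 0 ≤ ∫ y in Set.Ioi (0:ℝ), α j.succ y *
      Real.exp (-cumHaz (α j.succ) y - cumHaz (α i.succ) (y + ε) - cumHaz (α 0) (y + ε)) :=
    setIntegral_nonneg measurableSet_Ioi fun y hy =>
      mul_nonneg (hαpos j.succ y (le_of_lt hy)).le (Real.exp_pos _).le
  have hnni : 0 ≤ ∫ y in Set.Ioi (0:ℝ), α i.succ y *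
      Real.exp (-cumHaz (α i.succ) y - cumHaz (α j.succ) (y + ε) - cumHaz (α 0) (y + ε)) :=
    setIntegral_nonneg measurableSet_Ioi fun y hy =>
      mul_nonneg (hαpos i.succ y (le_of_lt hy)).le (Real.exp_pos _).le
  rw [hE, measure_compl (hmCi.union hmCj) (measure_ne_top P _), measure_univ,
    measure_union hdisj hmCj, hPCi, hPCj, ENNReal.ofReal_add hnnj hnni, add_comm]

end main
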